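/- Chvátal's hypergeometric tail bound: if Z is hypergeometric with parameters n, m, r, then for every δ ≥ 0, P(Z ≥ rm/n + rδ) ≤ exp(−2δ²r). -/

import Mathlib

open MeasureTheory Finset Real


lemma desc_cross (m n j : ℕ) (hmn : m ≤ n) :
    m.descFactorial j * n ^ j ≤ n.descFactorial j * m ^ j := by
  have h1 : (n:ℕ) ^ j = ∏ _i ∈ range j, n := by simp
  have h2 : (m:ℕ) ^ j = ∏ _i ∈ range j, m := by simp
  rw [Nat.descFactorial_eq_prod_range, Nat.descFactorial_eq_prod_range, h1, h2,
    ← Finset.prod_mul_distrib, ← Finset.prod_mul_distrib]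
  apply Finset.prod_le_prod'
  intro i _
  rw [Nat.sub_mul, Nat.sub_mul, Nat.mul_comm n m]
  exact Nat.sub_le_sub_left (Nat.mul_le_mul_left i hmn) _

lemma choose_cross (m n j : ℕ) (hmn : m ≤ n) :
    m.choose j * n ^ j ≤ n.choose j * m ^ j := by
  have h := desc_cross m n j hmn
  rw [Nat.descFactorial_eq_factorial_mul_choose, Nat.descFactorial_eq_factorial_mul_choose,
    Nat.mul_assoc, Nat.mul_assoc] at h
  exact Nat.le_of_mul_le_mul_left h (Nat.factorial_pos j)

lemma choose_mul_choose (m z j : ℕ) (hjz : j ≤ z) :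
    m.choose z * z.choose j = m.choose j * (m - j).choose (z - j) := by
  rcases le_or_gt z m with h | h
  · exact Nat.choose_mul hjz
  · rw [Nat.choose_eq_zero_of_lt h, Nat.zero_mul]
    rcases le_or_gt j m with h2 | h2
    · rw [Nat.choose_eq_zero_of_lt (show m - j < z - j by omega), Nat.mul_zero]
    · rw [Nat.choose_eq_zero_of_lt h2, Nat.zero_mul]

lemma sum_identity (n m r j : ℕ) (hmn : m ≤ n) (hjr : j ≤ r) :
    ∑ z ∈ range (r + 1), m.choose z * (n - m).choose (r - z) * z.choose j
      = m.choose j * (n - j).choose (r - j) := by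
  rcases le_or_gt j m with hjm | hjm
  · have step1 : ∑ z ∈ range (r + 1), m.choose z * (n - m).choose (r - z) * z.choose j
        = ∑ z ∈ Ico j (r + 1), m.choose z * (n - m).choose (r - z) * z.choose j := by
      refine (Finset.sum_subset ?_ ?_).symm
      · intro z hz; simp only [mem_Ico, mem_range] at *; omega
      · intro z hz1 hz2
        simp only [mem_Ico, mem_range] at *
        rw [Nat.choose_eq_zero_of_lt (show z < j by omega), Nat.mul_zero]
    have step2 : ∑ z ∈ Ico j (r + 1), m.choose z * (n - m).choose (r - z) * z.choose j
        = ∑ w ∈ range (r - j + 1), m.choose j * ((m - j).choose w * (n - m).choose (r - j - w)) := by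
      rw [Finset.sum_Ico_eq_sum_range]
      have hc : r + 1 - j = r - j + 1 := by omega
      rw [hc]
      refine Finset.sum_congr rfl ?_
      intro w _
      rw [mul_right_comm, choose_mul_choose m (j + w) j (by omega)]
      have h1 : j + w - j = w := by omega
      have h2 : r - (j + w) = r - j - w := by omega
      rw [h1, h2]; ring
    have vdm : ∑ w ∈ range (r - j + 1), (m - j).choose w * (n - m).choose (r - j - w)
        = (n - j).choose (r - j) := by
      have := Nat.add_choose_eq (m - j) (n - m) (r - j)
      rw [Finset.Nat.sum_antidiagonal_eq_sum_range_succ_mk] at this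
      have hadd : m - j + (n - m) = n - j := by omega
      rw [hadd] at this
      exact this.symm
    rw [step1, step2, ← Finset.mul_sum, vdm]
  · have : ∀ z ∈ range (r + 1),
        m.choose z * (n - m).choose (r - z) * z.choose j = 0 := by
      intro z _
      rcases le_or_gt z m with h | h
      · rw [Nat.choose_eq_zero_of_lt (show z < j by omega), Nat.mul_zero]
      · rw [Nat.choose_eq_zero_of_lt h, Nat.zero_mul, Nat.zero_mul]
    rw [Finset.sum_congr rfl this, Finset.sum_const, smul_zero,
      Nat.choose_eq_zero_of_lt hjm, Nat.zero_mul]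



lemma mgf_bound (n m r : ℕ) (hn : 0 < n) (hmn : m ≤ n) (hrn : r ≤ n) (x : ℝ) (hx : 1 ≤ x) :
    ∑ z ∈ range (r + 1), (m.choose z * (n - m).choose (r - z) : ℝ) / (n.choose r) * x ^ z
      ≤ (1 - (m : ℝ)/n + (m : ℝ)/n * x) ^ r := by
  set p : ℝ := (m : ℝ)/n with hp
  set u : ℝ := x - 1 with hu
  have hu0 : 0 ≤ u := by simp only [hu]; linarith
  have hnr : (0:ℝ) < (n.choose r : ℝ) := by
    exact_mod_cast Nat.cast_pos.mpr (Nat.choose_pos hrn)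
  have hn0 : (0:ℝ) < (n:ℝ) := by exact_mod_cast hn
  have hp0 : 0 ≤ p := div_nonneg (Nat.cast_nonneg m) hn0.le
  have expand : ∀ z ∈ range (r + 1),
      x ^ z = ∑ j ∈ range (r + 1), (z.choose j : ℝ) * u ^ j := by
    intro z hz
    simp only [mem_range] at hz
    have h1 : x = u + 1 := by ring
    rw [h1, add_pow]
    simp only [one_pow, mul_one]
    rw [Finset.sum_subset (Finset.range_subset_range.mpr (show z + 1 ≤ r + 1 by omega))
      (fun j _ hj => by
        rw [Nat.choose_eq_zero_of_lt (by simp only [mem_range] at hj; omega)]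
        simp)]
    exact Finset.sum_congr rfl fun j _ => by ring
  -- rewrite LHS as double sum and swap
  have lhs_eq : ∑ z ∈ range (r + 1),
        (m.choose z * (n - m).choose (r - z) : ℝ) / (n.choose r) * x ^ z
      = ∑ j ∈ range (r + 1),
          ((∑ z ∈ range (r + 1), (m.choose z * (n - m).choose (r - z) * z.choose j : ℝ))
            / (n.choose r)) * u ^ j := by
    rw [Finset.sum_congr rfl fun z hz => by rw [expand z hz]]
    simp only [Finset.mul_sum]
    rw [Finset.sum_comm]
    refine Finset.sum_congr rfl fun j _ => ?_
    rw [Finset.sum_div, Finset.sum_mul]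
    refine Finset.sum_congr rfl fun z _ => ?_
    push_cast
    ring
  rw [lhs_eq]
  -- bound each coefficient
  have coeff_le : ∀ j ∈ range (r + 1),
      ((∑ z ∈ range (r + 1), (m.choose z * (n - m).choose (r - z) * z.choose j : ℝ))
          / (n.choose r)) * u ^ j
        ≤ (r.choose j : ℝ) * (p * u) ^ j := by
    intro j hj
    simp only [mem_range] at hj
    have hjr : j ≤ r := by omega
    have hid : (∑ z ∈ range (r + 1), (m.choose z * (n - m).choose (r - z) * z.choose j : ℝ))
        = (m.choose j * (n - j).choose (r - j) : ℝ) := by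
      exact_mod_cast congrArg (Nat.cast : ℕ → ℝ) (sum_identity n m r j hmn hjr)
    rw [hid, mul_pow]
    rw [div_mul_eq_mul_div, div_le_iff₀ hnr]
    -- goal: C(m,j) * C(n-j,r-j) * u^j ≤ C(r,j) * p^j * u^j * C(n,r)
    have hcc : (m.choose j : ℝ) ≤ (n.choose j : ℝ) * p ^ j := by
      have h' : (m.choose j : ℝ) * (n:ℝ) ^ j ≤ (n.choose j : ℝ) * (m:ℝ) ^ j := by
        exact_mod_cast choose_cross m n j hmn
      have hnj : (0:ℝ) < (n:ℝ) ^ j := pow_pos hn0 j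
      rw [hp, div_pow]
      calc (m.choose j : ℝ) = (m.choose j : ℝ) * (n:ℝ) ^ j / (n:ℝ) ^ j := by field_simp
        _ ≤ (n.choose j : ℝ) * (m:ℝ) ^ j / (n:ℝ) ^ j := by gcongr
        _ = (n.choose j : ℝ) * ((m:ℝ) ^ j / (n:ℝ) ^ j) := by ring
    have hkey : (n.choose r : ℝ) * (r.choose j : ℝ) = (n.choose j : ℝ) * ((n - j).choose (r - j) : ℝ) := by
      exact_mod_cast congrArg (Nat.cast : ℕ → ℝ) (Nat.choose_mul (n := n) hjr)
    have hnn : (0:ℝ) ≤ ((n - j).choose (r - j) : ℝ) := Nat.cast_nonneg _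
    have hun : (0:ℝ) ≤ u ^ j := pow_nonneg hu0 j
    calc (m.choose j : ℝ) * ((n - j).choose (r - j) : ℝ) * u ^ j
        ≤ ((n.choose j : ℝ) * p ^ j) * ((n - j).choose (r - j) : ℝ) * u ^ j := by
          apply mul_le_mul_of_nonneg_right (mul_le_mul_of_nonneg_right hcc hnn) hun
      _ = (r.choose j : ℝ) * p ^ j * u ^ j * (n.choose r : ℝ) := by
          rw [show (n.choose j : ℝ) * p ^ j * ((n - j).choose (r - j) : ℝ)
              = ((n.choose j : ℝ) * ((n - j).choose (r - j) : ℝ)) * p ^ j by ring, ← hkey]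
          ring
      _ = (r.choose j : ℝ) * (p ^ j * u ^ j) * (n.choose r : ℝ) := by ring
  calc ∑ j ∈ range (r + 1),
        ((∑ z ∈ range (r + 1), (m.choose z * (n - m).choose (r - z) * z.choose j : ℝ))
          / (n.choose r)) * u ^ j
      ≤ ∑ j ∈ range (r + 1), (r.choose j : ℝ) * (p * u) ^ j :=
        Finset.sum_le_sum coeff_le
    _ = (1 - p + p * x) ^ r := by
        have h1 : 1 - p + p * x = (p * u) + 1 := by rw [hu]; ring
        rw [h1, add_pow]
        simp only [one_pow, mul_one]
        exact Finset.sum_congr rfl fun j _ => by ring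


lemma hoeffding_scalar (p : ℝ) (hp0 : 0 ≤ p) (hp1 : p ≤ 1) (t : ℝ) (ht : 0 ≤ t) :
    1 - p + p * Real.exp t ≤ Real.exp (t * p + t ^ 2 / 8) := by
  set D : ℝ → ℝ := fun s => 1 - p + p * Real.exp s with hD
  have hDpos : ∀ s, 0 < D s := by
    intro s
    have he := Real.exp_pos s
    rcases eq_or_lt_of_le hp0 with h | h
    · simp only [hD, ← h]; norm_num
    · have h2 : 0 < p * Real.exp s := mul_pos h he
      simp only [hD]; linarith
  set g : ℝ → ℝ := fun s => p + s / 4 - p * Real.exp s / D s with hg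
  have hDd : ∀ s, HasDerivAt D (p * Real.exp s) s := fun s =>
    ((Real.hasDerivAt_exp s).const_mul p).const_add (1 - p)
  have hgd : ∀ s, HasDerivAt g (1 / 4 - p * Real.exp s * (1 - p) / (D s) ^ 2) s := by
    intro s
    have hf : HasDerivAt (fun s => p * Real.exp s) (p * Real.exp s) s :=
      (Real.hasDerivAt_exp s).const_mul p
    have hq : HasDerivAt (fun s => p * Real.exp s / D s)
        ((p * Real.exp s * D s - p * Real.exp s * (p * Real.exp s)) / (D s) ^ 2) s :=
      hf.div (hDd s) (hDpos s).ne'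
    have hl : HasDerivAt (fun s => p + s / 4) (1 / 4) s := by
      simpa using ((hasDerivAt_id s).div_const 4).const_add p
    have := hl.sub hq
    refine this.congr_deriv ?_
    have : p * Real.exp s * D s - p * Real.exp s * (p * Real.exp s)
        = p * Real.exp s * (1 - p) := by simp only [hD]; ring
    rw [this]
  have hgmono : Monotone g := by
    apply monotone_of_deriv_nonneg
    · exact fun s => (hgd s).differentiableAt
    · intro s
      rw [(hgd s).deriv]
      have hDs : D s = 1 - p + p * Real.exp s := rfl
      have hD2 : (0:ℝ) < (D s) ^ 2 := pow_pos (hDpos s) 2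
      rw [sub_nonneg, div_le_iff₀ hD2, hDs]
      nlinarith [sq_nonneg ((1 - p) - p * Real.exp s)]
  have hg0 : g 0 = 0 := by simp [hg, hD]
  have hgnn : ∀ s, 0 ≤ s → 0 ≤ g s := fun s hs => hg0 ▸ hgmono hs
  set h : ℝ → ℝ := fun s => s * p + s ^ 2 / 8 - Real.log (D s) with hh
  have hhd : ∀ s, HasDerivAt h (g s) s := by
    intro s
    have h1 : HasDerivAt (fun s : ℝ => s * p) p s := by simpa using (hasDerivAt_id s).mul_const p
    have h2 : HasDerivAt (fun s : ℝ => s ^ 2 / 8) (2 * s / 8) s := by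
      simpa using (hasDerivAt_pow 2 s).div_const 8
    have h3 : HasDerivAt (fun s => Real.log (D s)) (p * Real.exp s / D s) s :=
      (hDd s).log (hDpos s).ne'
    have := (h1.add h2).sub h3
    refine this.congr_deriv ?_
    simp only [hg]; ring
  have hmono : MonotoneOn h (Set.Ici 0) := by
    apply monotoneOn_of_deriv_nonneg (convex_Ici 0)
    · exact (Differentiable.continuous fun s => (hhd s).differentiableAt).continuousOn
    · intro s _
      exact (hhd s).differentiableAt.differentiableWithinAt
    · intro s hs
      rw [(hhd s).deriv]
      exact hgnn s (le_of_lt (by simpa using hs))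
  have hh0 : h 0 = 0 := by simp [hh, hD]
  have hht : 0 ≤ h t := hh0 ▸ hmono Set.self_mem_Ici (Set.mem_Ici.mpr ht) ht
  have : Real.log (D t) ≤ t * p + t ^ 2 / 8 := by simp only [hh] at hht; linarith
  calc 1 - p + p * Real.exp t = D t := rfl
    _ ≤ Real.exp (t * p + t ^ 2 / 8) := by
        rw [← Real.exp_log (hDpos t)]
        exact Real.exp_le_exp.mpr this



/-- Chvátal's hypergeometric tail bound: if `Z` is hypergeometric with parameters
`n`, `m`, `r`, then for every `δ ≥ 0`, `P(Z ≥ rm/n + rδ) ≤ exp(−2δ²r)`. -/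
theorem chvatal_tail_bound {Ω : Type*} [MeasurableSpace Ω]
    (μ : Measure Ω) [IsProbabilityMeasure μ]
    (n m r : ℕ) (hn : 0 < n) (hmn : m ≤ n) (hrn : r ≤ n)
    (Z : Ω → ℕ) (hZmeas : Measurable Z)
    (hZ : ∀ z : ℕ, (μ {ω | Z ω = z}).toReal =
      if z ≤ m ∧ z ≤ r then
        (Nat.choose m z * Nat.choose (n - m) (r - z) : ℝ) / Nat.choose n r
      else 0) :
    ∀ δ : ℝ, 0 ≤ δ →
      (μ {ω | (r : ℝ) * m / n + r * δ ≤ (Z ω : ℝ)}).toReal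
        ≤ Real.exp (-2 * δ ^ 2 * r) := by
  intro δ hδ
  have hn0 : (0:ℝ) < (n:ℝ) := by exact_mod_cast hn
  set p : ℝ := (m:ℝ)/n with hp
  have hp0 : 0 ≤ p := div_nonneg (Nat.cast_nonneg m) hn0.le
  have hp1 : p ≤ 1 := (div_le_one hn0).mpr (by exact_mod_cast hmn)
  set t : ℝ := 4 * δ with htdef
  have ht : 0 ≤ t := by positivity
  set a : ℝ := (r : ℝ) * m / n + r * δ with ha
  set P : ℕ → ℝ := fun z => (m.choose z * (n - m).choose (r - z) : ℝ) / (n.choose r) with hP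
  have hPnn : ∀ z, 0 ≤ P z := fun z => by
    apply div_nonneg _ (Nat.cast_nonneg _)
    positivity
  -- the event as a disjoint union
  set S : ℕ → Set Ω := fun z => {ω | Z ω = z ∧ a ≤ (z:ℝ)} with hS
  have hSif : ∀ z, S z = if a ≤ (z:ℝ) then {ω | Z ω = z} else ∅ := by
    intro z
    by_cases h : a ≤ (z:ℝ) <;> simp only [hS, h, if_true, if_false] <;> ext ω <;>
      simp [h]
  have hSmeas : ∀ z, MeasurableSet (S z) := by
    intro z
    rw [hSif]
    split
    · exact hZmeas (measurableSet_singleton z)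
    · exact MeasurableSet.empty
  have hdisj : Pairwise (Function.onFun Disjoint S) := by
    intro i j hij
    simp only [Function.onFun, Set.disjoint_left]
    rintro ω ⟨h1, -⟩ ⟨h2, -⟩
    exact hij (h1 ▸ h2 ▸ rfl)
  have hE : {ω | a ≤ (Z ω : ℝ)} = ⋃ z, S z := by
    ext ω
    simp only [Set.mem_setOf_eq, Set.mem_iUnion, hS]
    exact ⟨fun h => ⟨Z ω, rfl, h⟩, fun ⟨z, hz, h⟩ => hz ▸ h⟩
  -- measure of {Z = z} vanishes for z > r
  have hzero : ∀ z, r < z → μ {ω | Z ω = z} = 0 := by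
    intro z hz
    have h1 := hZ z
    rw [if_neg (by omega)] at h1
    rcases (ENNReal.toReal_eq_zero_iff _).mp h1 with h | h
    · exact h
    · exact absurd h (measure_ne_top μ _)
  have hSzero : ∀ z ∉ range (r + 1), μ (S z) = 0 := by
    intro z hz
    simp only [mem_range] at hz
    refine le_antisymm ?_ zero_le
    calc μ (S z) ≤ μ {ω | Z ω = z} := measure_mono fun ω h => h.1
      _ = 0 := hzero z (by omega)
  -- main computation of toReal
  have key : (μ {ω | a ≤ (Z ω : ℝ)}).toReal
      = ∑ z ∈ range (r + 1), if a ≤ (z:ℝ) then P z else 0 := by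
    rw [hE, measure_iUnion hdisj hSmeas, tsum_eq_sum hSzero, ENNReal.toReal_sum
      (fun z _ => measure_ne_top μ _)]
    refine Finset.sum_congr rfl fun z hz => ?_
    simp only [mem_range] at hz
    rw [hSif]
    split
    · rw [hZ z]
      by_cases hm : z ≤ m
      · rw [if_pos ⟨hm, by omega⟩]
      · rw [if_neg (by omega), hP]
        simp [Nat.choose_eq_zero_of_lt (by omega : m < z)]
    · simp
  rw [key]
  -- Chernoff step
  have step1 : ∑ z ∈ range (r + 1), (if a ≤ (z:ℝ) then P z else 0)
      ≤ ∑ z ∈ range (r + 1), P z * (Real.exp (-t * a) * Real.exp t ^ z) := by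
    refine Finset.sum_le_sum fun z _ => ?_
    have hrw : Real.exp (-t * a) * Real.exp t ^ z = Real.exp (t * ((z:ℝ) - a)) := by
      rw [← Real.exp_nat_mul, ← Real.exp_add]; ring_nf
    rw [hrw]
    split
    · next h =>
      nth_rewrite 1 [show P z = P z * 1 by ring]
      apply mul_le_mul_of_nonneg_left _ (hPnn z)
      exact Real.one_le_exp (by nlinarith)
    · exact mul_nonneg (hPnn z) (Real.exp_pos _).le
  refine step1.trans ?_
  have step2 : ∑ z ∈ range (r + 1), P z * (Real.exp (-t * a) * Real.exp t ^ z)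
      = Real.exp (-t * a) * ∑ z ∈ range (r + 1), P z * Real.exp t ^ z := by
    rw [Finset.mul_sum]; exact Finset.sum_congr rfl fun z _ => by ring
  rw [step2]
  have hx : (1:ℝ) ≤ Real.exp t := Real.one_le_exp ht
  have step3 := mgf_bound n m r hn hmn hrn (Real.exp t) hx
  have hbase : 0 ≤ 1 - p + p * Real.exp t := by nlinarith [Real.exp_pos t]
  have step4 : (1 - p + p * Real.exp t) ^ r ≤ Real.exp (t * p + t ^ 2 / 8) ^ r :=
    pow_le_pow_left₀ hbase (hoeffding_scalar p hp0 hp1 t ht) r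
  calc Real.exp (-t * a) * ∑ z ∈ range (r + 1), P z * Real.exp t ^ z
      ≤ Real.exp (-t * a) * (1 - p + p * Real.exp t) ^ r := by
        apply mul_le_mul_of_nonneg_left _ (Real.exp_pos _).le
        exact step3
    _ ≤ Real.exp (-t * a) * Real.exp (t * p + t ^ 2 / 8) ^ r := by
        exact mul_le_mul_of_nonneg_left step4 (Real.exp_pos _).le
    _ = Real.exp (-2 * δ ^ 2 * r) := by
        rw [← Real.exp_nat_mul, ← Real.exp_add]
        congr 1
        rw [ha, htdef, hp]
        field_simp
        ring
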